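/- For a continuous function ω : [0,T] → ℝ, the strong variation exponent vex(ω) never lies in the open interval (0,1); that is, either vex(ω) = 0 or vex(ω) ≥ 1. -/

import Mathlib

open scoped ENNReal

noncomputable section

/-- Strong `p`-variation of `f` over `[a,b]`: the supremum over all finite
subdivisions `a = t₀ < t₁ < ⋯ < tₙ = b` of `Σᵢ |f(tᵢ) − f(tᵢ₋₁)|^p`. -/
def pVar (p : ℝ) (f : ℝ → ℝ) (a b : ℝ) : ℝ≥0∞ :=
  ⨆ (n : ℕ) (t : Fin (n + 1) → ℝ)
    (_ : StrictMono t ∧ t 0 = a ∧ t (Fin.last n) = b),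
    ∑ i : Fin n, ENNReal.ofReal (|f (t i.succ) - f (t i.castSucc)| ^ p)

/-- `v` is a strong variation exponent of `f` over `[0,T]`:
`var_p(f)` is finite for `p > v` and infinite for `p < v`. -/
def IsVex (T : ℝ) (f : ℝ → ℝ) (v : ℝ≥0∞) : Prop :=
  (∀ p : ℝ, 0 < p → v < ENNReal.ofReal p → pVar p f 0 T < ⊤) ∧
  (∀ p : ℝ, 0 < p → ENNReal.ofReal p < v → pVar p f 0 T = ⊤)

/-- The strong variation exponent of `f` over `[0,T]`. -/
def vex (T : ℝ) (f : ℝ → ℝ) : ℝ≥0∞ :=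
  sInf {v : ℝ≥0∞ | ∀ p : ℝ, 0 < p → v < ENNReal.ofReal p → pVar p f 0 T < ⊤}

/-- The sample space: continuous real-valued functions on `[0,T]`. -/
def GSpace (T : ℝ) := {f : ℝ → ℝ // ContinuousOn f (Set.Icc 0 T)}

/-- The filtration: `ℱ_t` is generated by the evaluation maps `ω ↦ ω(s)`, `s ∈ [0,t]`. -/
def gFiltration (T t : ℝ) : MeasurableSpace (GSpace T) :=
  ⨆ s ∈ Set.Icc (0 : ℝ) t, MeasurableSpace.comap (fun ω : GSpace T => ω.1 s) inferInstance

/-- An elementary trading strategy: an increasing sequence of stopping times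
`τₙ` (with values in `[0,T] ∪ {∞}`, only finitely many finite on each `ω`)
together with bounded `ℱ_{τₙ}`-measurable portfolios `hₙ`. -/
structure ElemStrategy (T : ℝ) where
  τ : ℕ → GSpace T → ℝ≥0∞
  h : ℕ → GSpace T → ℝ
  mono : ∀ n ω, τ n ω ≤ τ (n + 1) ω
  codom : ∀ n ω, τ n ω ≤ ENNReal.ofReal T ∨ τ n ω = ⊤
  fin : ∀ ω, Set.Finite {n | τ n ω ≠ ⊤}
  stopping : ∀ n (t : ℝ), (gFiltration T t).MeasurableSet' {ω | τ n ω ≤ ENNReal.ofReal t}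
  bdd : ∀ n, ∃ C : ℝ, ∀ ω, |h n ω| ≤ C
  adapted : ∀ n (B : Set ℝ), MeasurableSet B → ∀ t : ℝ,
    (gFiltration T t).MeasurableSet' ({ω | h n ω ∈ B} ∩ {ω | τ n ω ≤ ENNReal.ofReal t})

/-- The elementary capital process
`K_t(ω) = c + Σₙ hₙ(ω) (ω(τ_{n+1} ∧ t) − ω(τₙ ∧ t))`. -/
def ElemStrategy.capital {T : ℝ} (G : ElemStrategy T) (c : ℝ) (t : ℝ) (ω : GSpace T) : ℝ :=
  c + ∑' n : ℕ,
    G.h n ω * (ω.1 ((G.τ (n + 1) ω ⊓ ENNReal.ofReal t).toReal)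
      - ω.1 ((G.τ n ω ⊓ ENNReal.ofReal t).toReal))

/-- A positive capital process: a countable sum of positive elementary capital
processes with summable positive initial capitals. -/
structure PosCapital (T : ℝ) where
  G : ℕ → ElemStrategy T
  c : ℕ → ℝ
  c_nonneg : ∀ n, 0 ≤ c n
  c_summable : Summable c
  pos : ∀ n (t : ℝ), t ∈ Set.Icc 0 T → ∀ ω, 0 ≤ (G n).capital (c n) t ω

/-- The value (in `[0,∞]`) of a positive capital process at time `t`. -/
def PosCapital.value {T : ℝ} (S : PosCapital T) (t : ℝ) (ω : GSpace T) : ℝ≥0∞ :=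
  ∑' n : ℕ, ENNReal.ofReal ((S.G n).capital (S.c n) t ω)

/-- The initial value `S₀ = Σₙ cₙ` of a positive capital process. -/
def PosCapital.init {T : ℝ} (S : PosCapital T) : ℝ≥0∞ :=
  ∑' n : ℕ, ENNReal.ofReal (S.c n)

/-- Game-theoretic upper probability of `E ⊆ Ω`:
`inf {S₀ : S positive capital process, S_T ≥ 1_E}`. -/
def upperProb (T : ℝ) (E : Set (GSpace T)) : ℝ≥0∞ :=
  ⨅ (S : PosCapital T) (_ : ∀ ω, E.indicator (fun _ => (1 : ℝ≥0∞)) ω ≤ S.value T ω), S.init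

/-- The number of upcrossings (as an element of `[0,∞]`) of the open interval
`(a,b)` by `f` during the time interval `[0,t]`. -/
def upcross (f : ℝ → ℝ) (a b t : ℝ) : ℝ≥0∞ :=
  ⨆ (n : ℕ) (u : Fin n → ℝ) (v : Fin n → ℝ)
    (_ : (∀ i, 0 ≤ u i ∧ u i < v i ∧ v i ≤ t) ∧
         (∀ i j : Fin n, i < j → v i < u j) ∧
         (∀ i, f (u i) < a ∧ b < f (v i))),
    (n : ℝ≥0∞)

/-- `M_t(f,δ) = Σ_{k∈ℤ} M_t(f,(kδ,(k+1)δ))`: the total number of upcrossings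
of the intervals of the `δ`-grid by `f` during `[0,t]`. -/
def gridUpcross (f : ℝ → ℝ) (δ t : ℝ) : ℝ≥0∞ :=
  ∑' k : ℤ, upcross f (k * δ) ((k + 1) * δ) t

/-- The successive hitting times of new points of the grid `δℤ`:
`τ₀ = 0`, `τ_{n+1} = inf {t ∈ (τₙ, T] : f(t) ∈ δℤ \ {f(τₙ)}}` (with `inf ∅ = ∞`). -/
def gridTimes (T δ : ℝ) (f : ℝ → ℝ) : ℕ → ℝ≥0∞
  | 0 => 0
  | n + 1 => sInf {s : ℝ≥0∞ | ∃ t : ℝ, s = ENNReal.ofReal t ∧ t ≤ T ∧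
      gridTimes T δ f n < ENNReal.ofReal t ∧ (∃ k : ℤ, f t = (k : ℝ) * δ) ∧
      f t ≠ f ((gridTimes T δ f n).toReal)}

lemma pVar_eq_zero_of_const (p : ℝ) (hp : 0 < p) (ω : ℝ → ℝ) (T c : ℝ)
    (h : ∀ x ∈ Set.Icc (0:ℝ) T, ω x = c) : pVar p ω 0 T = 0 := by
  refine le_antisymm ?_ (zero_le)
  refine iSup_le fun n => iSup_le fun t => iSup_le fun ht => ?_
  obtain ⟨hm, h0, hl⟩ := ht
  have hmem : ∀ i : Fin (n+1), t i ∈ Set.Icc (0:ℝ) T := fun i =>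
    ⟨h0 ▸ hm.monotone (Fin.zero_le i), hl ▸ hm.monotone (Fin.le_last i)⟩
  have hz : ∀ i : Fin n, ENNReal.ofReal (|ω (t i.succ) - ω (t i.castSucc)| ^ p) = 0 := by
    intro i
    rw [h _ (hmem _), h _ (hmem _), sub_self, abs_zero, Real.zero_rpow hp.ne',
      ENNReal.ofReal_zero]
  simp [hz]

lemma key (T : ℝ) (ω : ℝ → ℝ)
    (hω : ContinuousOn ω (Set.Icc 0 T)) (q : ℝ) (hq0 : 0 < q) (hq1 : q < 1)
    (hfin : pVar q ω 0 T < ⊤) (a b : ℝ) (ha : 0 < a) (hab : a < b) (hbT : b < T) :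
    ω a = ω b := by
  set K := (pVar q ω 0 T).toReal with hK
  have main : ∀ ε : ℝ, 0 < ε → |ω b - ω a| ≤ K * ε ^ (1 - q) := by
    intro ε hε
    obtain ⟨δ, hδ0, hδ⟩ := Metric.uniformContinuousOn_iff_le.mp
      (isCompact_Icc.uniformContinuousOn_of_continuous hω) ε hε
    obtain ⟨N, hN⟩ := exists_nat_gt ((b - a) / δ)
    have hba : 0 < b - a := by linarith
    have hN0 : 0 < (N : ℝ) := lt_trans (by positivity) hN
    set d := (b - a) / N with hd_def
    have hd : 0 < d := by positivity
    have hdδ : d ≤ δ := by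
      rw [hd_def, div_le_iff₀ hN0]
      nlinarith [(div_lt_iff₀ hδ0).mp hN]
    set g : ℕ → ℝ := fun k => a + k * d with hg
    have hgmono : StrictMono g := by
      intro m n hmn
      simp only [hg]
      have : (m : ℝ) < n := by exact_mod_cast hmn
      nlinarith
    have hgN : g N = b := by
      simp only [hg, hd_def]
      field_simp
      ring
    have hgIcc : ∀ k : ℕ, k ≤ N → g k ∈ Set.Icc (0:ℝ) T := by
      intro k hk
      constructor
      · have hkd : (0:ℝ) ≤ (k:ℝ) * d := mul_nonneg (Nat.cast_nonneg k) hd.le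
        have : a ≤ g k := by simp only [hg]; linarith
        linarith
      · have : g k ≤ g N := by
          rcases eq_or_lt_of_le hk with h | h
          · rw [h]
          · exact (hgmono h).le
        rw [hgN] at this; linarith
    set t : Fin (N + 3) → ℝ := fun i =>
      if (i : ℕ) = 0 then 0 else if (i : ℕ) = N + 2 then T else g ((i : ℕ) - 1) with ht
    have ht_mid : ∀ i : Fin (N + 3), 1 ≤ (i : ℕ) → (i : ℕ) ≤ N + 1 → t i = g ((i : ℕ) - 1) := by
      intro i h1 h2
      simp only [ht]
      rw [if_neg (by omega), if_neg (by omega)]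
    have hmono : StrictMono t := by
      rw [Fin.strictMono_iff_lt_succ]
      intro i
      have hcs : ((i.castSucc : Fin (N+3)) : ℕ) = (i : ℕ) := rfl
      have hss : ((i.succ : Fin (N+3)) : ℕ) = (i : ℕ) + 1 := rfl
      have hi : (i : ℕ) < N + 2 := i.isLt
      by_cases h0 : (i : ℕ) = 0
      · have e1 : t i.castSucc = 0 := by simp only [ht, hcs, h0]; norm_num
        have e2 : t i.succ = g 0 := by
          rw [ht_mid _ (by omega) (by omega), hss, h0]
        rw [e1, e2]; simp only [hg]; push_cast; linarith
      · by_cases hlst : (i : ℕ) = N + 1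
        · have e1 : t i.castSucc = g N := by
            rw [ht_mid _ (by omega) (by omega), hcs, hlst]; norm_num
          have e2 : t i.succ = T := by
            simp only [ht, hss, hlst]
            simp
          rw [e1, e2, hgN]; linarith
        · have e1 : t i.castSucc = g ((i : ℕ) - 1) := by
            rw [ht_mid _ (by omega) (by omega), hcs]
          have e2 : t i.succ = g (i : ℕ) := by
            rw [ht_mid _ (by omega) (by omega), hss]; norm_num
          rw [e1, e2]
          exact hgmono (by omega)
    have h0 : t 0 = 0 := by simp [ht]
    have hlast : t (Fin.last (N + 2)) = T := by
      simp only [ht, Fin.val_last]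
      simp
    set F : Fin (N + 2) → ℝ≥0∞ :=
      fun i => ENNReal.ofReal (|ω (t i.succ) - ω (t i.castSucc)| ^ q) with hF
    have hsum : ∑ i, F i ≤ pVar q ω 0 T := by
      refine le_iSup_of_le (N + 2) ?_
      refine le_iSup_of_le t ?_
      exact le_iSup_of_le ⟨hmono, h0, hlast⟩ le_rfl
    set x : Fin N → ℝ := fun k => |ω (g ((k : ℕ) + 1)) - ω (g (k : ℕ))| ^ q with hx
    have hxnn : ∀ k : Fin N, 0 ≤ x k := fun k => Real.rpow_nonneg (abs_nonneg _) _
    set e : Fin N → Fin (N + 2) := fun k => ⟨(k : ℕ) + 1, by omega⟩ with he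
    have hmatch : ∀ k : Fin N, F (e k) = ENNReal.ofReal (x k) := by
      intro k
      have hk : (k : ℕ) < N := k.isLt
      have e1 : t (e k).castSucc = g (k : ℕ) := by
        rw [ht_mid _ (Nat.succ_le_succ (Nat.zero_le _)) (Nat.succ_le_succ hk.le)]
        simp [he]
      have e2 : t (e k).succ = g ((k : ℕ) + 1) := by
        rw [ht_mid _ (Nat.succ_le_succ (Nat.zero_le _)) (Nat.succ_le_succ hk)]
        simp [he]
      simp only [hF, e1, e2, hx]
    have heinj : Function.Injective e := by
      intro k1 k2 h
      have : (k1 : ℕ) + 1 = (k2 : ℕ) + 1 := congrArg Fin.val h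
      exact Fin.ext (by omega)
    have hS : ∑ k, ENNReal.ofReal (x k) ≤ ∑ i, F i := by
      calc ∑ k, ENNReal.ofReal (x k) = ∑ k, F (e k) := by
            exact Finset.sum_congr rfl fun k _ => (hmatch k).symm
        _ = ∑ i ∈ Finset.univ.image e, F i := (Finset.sum_image
            (fun k _ k' _ h => heinj h)).symm
        _ ≤ ∑ i, F i := Finset.sum_le_sum_of_subset (Finset.subset_univ _)
    have hSK : ∑ k, x k ≤ K := by
      have h1 : ENNReal.ofReal (∑ k, x k) ≤ pVar q ω 0 T := by
        rw [ENNReal.ofReal_sum_of_nonneg (fun k _ => hxnn k)]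
        exact le_trans hS hsum
      exact (ENNReal.ofReal_le_iff_le_toReal hfin.ne).mp h1
    have htel : ω b - ω a = ∑ k ∈ Finset.range N, (ω (g (k + 1)) - ω (g k)) := by
      have hg0 : g 0 = a := by simp [hg]
      rw [Finset.sum_range_sub (fun k => ω (g k)), hgN, hg0]
    have hterm : ∀ k : Fin N, |ω (g ((k : ℕ) + 1)) - ω (g (k : ℕ))| ≤ x k * ε ^ (1 - q) := by
      intro k
      have hk : (k : ℕ) < N := k.isLt
      have hmem1 := hgIcc (k : ℕ) (by omega)
      have hmem2 := hgIcc ((k : ℕ) + 1) (by omega)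
      have hdist : dist (g ((k : ℕ) + 1)) (g (k : ℕ)) ≤ δ := by
        rw [Real.dist_eq]
        have : g ((k : ℕ) + 1) - g (k : ℕ) = d := by simp [hg]; ring
        rw [this, abs_of_pos hd]; exact hdδ
      have hΔε : |ω (g ((k : ℕ) + 1)) - ω (g (k : ℕ))| ≤ ε := by
        have := hδ _ hmem2 _ hmem1 hdist
        rwa [Real.dist_eq] at this
      set Δ := |ω (g ((k : ℕ) + 1)) - ω (g (k : ℕ))| with hΔ
      have hΔnn : 0 ≤ Δ := abs_nonneg _
      calc Δ = Δ ^ (q + (1 - q)) := by norm_num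
        _ = Δ ^ q * Δ ^ (1 - q) := Real.rpow_add' hΔnn (by norm_num)
        _ ≤ Δ ^ q * ε ^ (1 - q) := by
            refine mul_le_mul_of_nonneg_left ?_ (Real.rpow_nonneg hΔnn _)
            exact Real.rpow_le_rpow hΔnn hΔε (by linarith)
        _ = x k * ε ^ (1 - q) := rfl
    calc |ω b - ω a| ≤ ∑ k ∈ Finset.range N, |ω (g (k + 1)) - ω (g k)| := by
          rw [htel]; exact Finset.abs_sum_le_sum_abs _ _
      _ = ∑ k : Fin N, |ω (g ((k : ℕ) + 1)) - ω (g (k : ℕ))| :=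
          (Fin.sum_univ_eq_sum_range _ _).symm
      _ ≤ ∑ k : Fin N, x k * ε ^ (1 - q) := Finset.sum_le_sum fun k _ => hterm k
      _ = (∑ k, x k) * ε ^ (1 - q) := (Finset.sum_mul _ _ _).symm
      _ ≤ K * ε ^ (1 - q) := by
          exact mul_le_mul_of_nonneg_right hSK (Real.rpow_nonneg hε.le _)
  have h0 : |ω b - ω a| ≤ 0 := by
    have hc : ContinuousAt (fun ε : ℝ => ε ^ (1 - q)) 0 :=
      Real.continuousAt_rpow_const 0 _ (Or.inr (by linarith))
    have hc2 : Filter.Tendsto (fun ε : ℝ => K * ε ^ (1 - q)) (nhds 0) (nhds 0) := by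
      have := (hc.tendsto).const_mul K
      simpa [Real.zero_rpow (by linarith : (1:ℝ) - q ≠ 0)] using this
    have hc3 : Filter.Tendsto (fun ε : ℝ => K * ε ^ (1 - q))
        (nhdsWithin 0 (Set.Ioi 0)) (nhds 0) := hc2.mono_left nhdsWithin_le_nhds
    exact ge_of_tendsto hc3 (Filter.eventually_of_mem self_mem_nhdsWithin
      fun ε hε => main ε hε)
  have := abs_nonpos_iff.mp h0
  linarith [sub_eq_zero.mp this]

lemma const_of_pVar_lt_top (T : ℝ) (hT : 0 < T) (ω : ℝ → ℝ)
    (hω : ContinuousOn ω (Set.Icc 0 T)) (q : ℝ) (hq0 : 0 < q) (hq1 : q < 1)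
    (hfin : pVar q ω 0 T < ⊤) : ∀ x ∈ Set.Icc (0:ℝ) T, ω x = ω (T / 2) := by
  have hmid : T / 2 ∈ Set.Ioo (0:ℝ) T := ⟨by linarith, by linarith⟩
  have hI : ∀ x ∈ Set.Ioo (0:ℝ) T, ω x = ω (T / 2) := by
    intro x hx
    rcases lt_trichotomy x (T / 2) with h | h | h
    · exact key T ω hω q hq0 hq1 hfin x (T / 2) hx.1 h hmid.2
    · rw [h]
    · exact (key T ω hω q hq0 hq1 hfin (T / 2) x hmid.1 h hx.2).symm
  have hlim : ∀ z ∈ Set.Icc (0:ℝ) T, z ∈ closure (Set.Ioo (0:ℝ) T) → ω z = ω (T / 2) := by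
    intro z hz hcl
    have hne : (nhdsWithin z (Set.Ioo (0:ℝ) T)).NeBot :=
      mem_closure_iff_nhdsWithin_neBot.mp hcl
    have h1 : Filter.Tendsto ω (nhdsWithin z (Set.Ioo 0 T)) (nhds (ω z)) :=
      (hω z hz).mono Set.Ioo_subset_Icc_self
    have h2 : Filter.Tendsto ω (nhdsWithin z (Set.Ioo 0 T)) (nhds (ω (T / 2))) := by
      refine Filter.Tendsto.congr' ?_ tendsto_const_nhds
      exact Filter.eventuallyEq_of_mem self_mem_nhdsWithin fun y hy => (hI y hy).symm
    exact tendsto_nhds_unique h1 h2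
  intro x hx
  refine hlim x hx ?_
  rw [closure_Ioo hT.ne]
  exact hx


/-- the strong variation exponent never lies in `(0,1)`. -/
theorem stmt1 (T : ℝ) (hT : 0 < T) (ω : ℝ → ℝ)
    (hω : ContinuousOn ω (Set.Icc 0 T)) (v : ℝ≥0∞) (hv : IsVex T ω v) :
    v = 0 ∨ 1 ≤ v := by
  by_contra hcon
  push_neg at hcon
  obtain ⟨hne, hlt⟩ := hcon
  have hvtop : v ≠ ⊤ := (hlt.trans_le le_top).ne
  set r := v.toReal with hr
  have hr0 : 0 < r := ENNReal.toReal_pos hne hvtop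
  have hr1 : r < 1 := by
    have := (ENNReal.toReal_lt_toReal hvtop (by norm_num)).mpr hlt
    simpa using this
  have hvr : v = ENNReal.ofReal r := (ENNReal.ofReal_toReal hvtop).symm
  set q := (r + 1) / 2 with hq
  have hq0 : 0 < q := by rw [hq]; linarith
  have hq1 : q < 1 := by rw [hq]; linarith
  have hvq : v < ENNReal.ofReal q := by
    rw [hvr]
    exact (ENNReal.ofReal_lt_ofReal_iff hq0).mpr (by rw [hq]; linarith)
  have hfin := hv.1 q hq0 hvq
  have hconst := const_of_pVar_lt_top T hT ω hω q hq0 hq1 hfin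
  have hpv : ENNReal.ofReal (r / 2) < v := by
    rw [hvr]
    exact (ENNReal.ofReal_lt_ofReal_iff hr0).mpr (by linarith)
  have htop := hv.2 (r / 2) (by linarith) hpv
  rw [pVar_eq_zero_of_const (r / 2) (by linarith) ω T (ω (T / 2)) hconst] at htop
  exact ENNReal.zero_ne_top htop
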